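/- Let A and B be finite types, E : A → B → Prop a decidable relation (a bipartite graph), and d₁ ≥ 4 a natural number. Suppose the bipartite graph contains K_{d₁, 2^{d₁}}: there exist finite sets S₀ ⊆ A with |S₀| = d₁ and T₀ ⊆ B with |T₀| = 2^{d₁} such that E a b for all a ∈ S₀, b ∈ T₀. Sample r : A × B → Bool uniformly at random (independent fair bits for every pair), and for each b ∈ B define the concept c_b : A → Bool by c_b a = (decide (E a b)) && r (a, b). Then with probability at least 2/3, there exists a finite set S ⊆ A with |S| = ⌈d₁/2⌉ that is shattered by the family {c_b : b ∈ B}. -/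

import Mathlib

lemma pow27 (n : ℕ) (hn : 4 ≤ n) : (6 * n : ℝ) ≤ 2.7 ^ n := by
  induction n, hn using Nat.le_induction with
  | base => norm_num
  | succ n hn ih =>
    have h1 : (2.7:ℝ) ^ (n+1) = 2.7 * 2.7 ^ n := by ring
    have hn' : (4:ℝ) ≤ n := by exact_mod_cast hn
    push_cast
    nlinarith

lemma exp_bound' (n : ℕ) (hn : 4 ≤ n) : (6 * n : ℝ) ≤ Real.exp n := by
  have h1 : (2.7:ℝ) ^ n ≤ Real.exp 1 ^ n := by
    apply pow_le_pow_left₀ (by norm_num)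
    linarith [Real.exp_one_gt_d9]
  have h2 : Real.exp 1 ^ n = Real.exp n := by
    rw [← Real.exp_nat_mul]; simp
  linarith [pow27 n hn]

lemma numeric (s m : ℕ) (hm : 2 ≤ m) (hsm : s ≤ m + 1) :
    3 * (2:ℝ) ^ s * ((2:ℝ) ^ s - 1) ^ (2 ^ (s + m)) ≤ ((2:ℝ) ^ s) ^ (2 ^ (s + m)) := by
  set n : ℝ := (2:ℝ) ^ s with hn
  set T : ℕ := 2 ^ (s + m) with hT
  have hnpos : (0:ℝ) < n := by positivity
  have hn1 : (1:ℝ) ≤ n := by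
    rw [hn]
    calc (1:ℝ) = 2 ^ 0 := by norm_num
    _ ≤ 2 ^ s := pow_le_pow_right₀ one_le_two (Nat.zero_le s)
  have hTn : (T : ℝ) / n = 2 ^ m := by
    rw [hT, hn]; push_cast
    rw [pow_add]; field_simp
  have h1 : n - 1 ≤ n * Real.exp (-(1/n)) := by
    have h := Real.add_one_le_exp (-(1/n))
    have h' := mul_le_mul_of_nonneg_left h hnpos.le
    have key : n * (-(1/n) + 1) = n - 1 := by field_simp; ring
    linarith
  have h2 : (n - 1) ^ T ≤ n ^ T * Real.exp (-(1/n)) ^ T := by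
    rw [← mul_pow]
    exact pow_le_pow_left₀ (by linarith) h1 T
  have h3 : Real.exp (-(1/n)) ^ T = Real.exp (-((T:ℝ)/n)) := by
    rw [← Real.exp_nat_mul]; ring_nf
  have h5 : 3 * n ≤ Real.exp ((2:ℝ) ^ m) := by
    have h6 : ((2:ℝ)) ^ m = ((2 ^ m : ℕ) : ℝ) := by push_cast; ring
    have h7 : (4:ℕ) ≤ 2 ^ m := by
      calc (4:ℕ) = 2 ^ 2 := rfl
      _ ≤ 2 ^ m := Nat.pow_le_pow_right (by norm_num) hm
    have hb := exp_bound' (2 ^ m) h7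
    rw [← h6] at hb
    have h8 : 3 * n ≤ 6 * (2:ℝ) ^ m := by
      rw [hn]
      have : (2:ℝ) ^ s ≤ 2 ^ (m + 1) := pow_le_pow_right₀ (by norm_num) hsm
      rw [pow_succ] at this
      linarith
    linarith
  have hexp : (0:ℝ) < Real.exp ((2:ℝ)^m) := Real.exp_pos _
  calc 3 * n * (n - 1) ^ T ≤ 3 * n * (n ^ T * Real.exp (-((2:ℝ)^m))) := by
        apply mul_le_mul_of_nonneg_left _ (by positivity)
        rw [← hTn, ← h3]; exact h2
      _ = (3 * n * (Real.exp ((2:ℝ)^m))⁻¹) * n ^ T := by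
        rw [Real.exp_neg]; ring
      _ ≤ 1 * n ^ T := by
        apply mul_le_mul_of_nonneg_right _ (by positivity)
        rw [mul_inv_le_iff₀ hexp, one_mul]; linarith
      _ = n ^ T := one_mul _

theorem completeness_random_flip {A B : Type*} [Fintype A] [Fintype B]
    (E : A → B → Prop) [∀ a b, Decidable (E a b)] (d₁ : ℕ) (hd₁ : 4 ≤ d₁)
    (S₀ : Finset A) (T₀ : Finset B) (hS₀ : S₀.card = d₁) (hT₀ : T₀.card = 2 ^ d₁)
    (hE : ∀ a ∈ S₀, ∀ b ∈ T₀, E a b) :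
    (2 : ℝ) / 3 ≤
      (Nat.card {r : A × B → Bool //
          ∃ S : Finset A, S.card = (d₁ + 1) / 2 ∧
            ∀ g : A → Bool, ∃ b : B, ∀ x ∈ S, (decide (E x b) && r (x, b)) = g x} : ℝ) /
        (Nat.card (A × B → Bool) : ℝ) := by
  classical
  set s := (d₁ + 1) / 2 with hs_def
  obtain ⟨S, hSsub, hScard⟩ := Finset.exists_subset_card_eq (s := S₀) (n := s) (by rw [hS₀]; omega)
  let Sx := {x // x ∈ S}
  let Tb := {b // b ∈ T₀}
  let P : A × B → Prop := fun p => p.1 ∈ S ∧ p.2 ∈ T₀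
  let R := {p : A × B // ¬ P p}
  let Bφ : (Sx → Bool) → (A × B → Bool) → Prop :=
    fun φ r => ∀ b : Tb, ∃ x : Sx, r (x.1, b.1) ≠ φ x
  let Bad : (A × B → Bool) → Prop := fun r => ∃ φ, Bφ φ r
  have cardSx : Fintype.card Sx = s :=
    (Fintype.card_of_subtype S (fun _ => Iff.rfl)).trans hScard
  have cardTb : Fintype.card Tb = 2 ^ d₁ :=
    (Fintype.card_of_subtype T₀ (fun _ => Iff.rfl)).trans hT₀
  -- the good predicate from the statement
  let Goal : (A × B → Bool) → Prop := fun r =>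
    ∃ S' : Finset A, S'.card = s ∧
      ∀ g : A → Bool, ∃ b : B, ∀ x ∈ S', (decide (E x b) && r (x, b)) = g x
  have himp : ∀ r, ¬ Bad r → Goal r := by
    intro r hr
    refine ⟨S, hScard, fun g => ?_⟩
    have h1 : ∃ b : Tb, ∀ x : Sx, r (x.1, b.1) = g x.1 := by
      by_contra hc
      push_neg at hc
      exact hr ⟨fun x => g x.1, hc⟩
    obtain ⟨b, hb⟩ := h1
    refine ⟨b.1, fun x hx => ?_⟩
    have hExb : E x b.1 := hE x (hSsub hx) b.1 b.2
    have := hb ⟨x, hx⟩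
    simp only [decide_eq_true hExb, Bool.true_and]
    exact this
  -- the main equivalence
  let e : (A × B → Bool) ≃ ((Sx × Tb → Bool) × (R → Bool)) :=
    (Equiv.piEquivPiSubtypeProd P (fun _ => Bool)).trans
      (Equiv.prodCongr (Equiv.arrowCongr Equiv.subtypeProdEquivProd (Equiv.refl Bool))
        (Equiv.refl _))
  have he : ∀ (r : A × B → Bool) (x : Sx) (b : Tb), (e r).1 (x, b) = r (x.1, b.1) :=
    fun _ _ _ => rfl
  -- per-φ count
  have hMφ : ∀ φ : Sx → Bool,
      Fintype.card {r : A × B → Bool // Bφ φ r}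
        = (2 ^ s - 1) ^ (2 ^ d₁) * 2 ^ (Fintype.card R) := by
    intro φ
    have e2 : {r : A × B → Bool // Bφ φ r}
        ≃ {f : Sx × Tb → Bool // ∀ b : Tb, ∃ x : Sx, f (x, b) ≠ φ x} × (R → Bool) :=
      (Equiv.subtypeEquiv (q := fun y : (Sx × Tb → Bool) × (R → Bool) =>
          ∀ b : Tb, ∃ x : Sx, y.1 (x, b) ≠ φ x) e (fun r => Iff.rfl)).trans
        (Equiv.prodSubtypeFstEquivSubtypeProd (α := Sx × Tb → Bool) (β := R → Bool)
          (p := fun f => ∀ b : Tb, ∃ x : Sx, f (x, b) ≠ φ x))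
    have e3 : {f : Sx × Tb → Bool // ∀ b : Tb, ∃ x : Sx, f (x, b) ≠ φ x}
        ≃ (Tb → {g : Sx → Bool // g ≠ φ}) := by
      refine Equiv.trans (Equiv.subtypeEquiv
        ((Equiv.arrowCongr (Equiv.prodComm Sx Tb) (Equiv.refl Bool)).trans
          (Equiv.curry Tb Sx Bool)) (fun f => ?_)) Equiv.subtypePiEquivPi
      constructor
      · intro h b
        rw [Function.ne_iff]
        exact h b
      · intro h b
        have := h b
        rw [Function.ne_iff] at this
        exact this
    have c1 : Fintype.card {g : Sx → Bool // g ≠ φ} = 2 ^ s - 1 := by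
      have h := Fintype.card_subtype_compl (fun g : Sx → Bool => g = φ)
      rw [Fintype.card_subtype_eq] at h
      rw [h, Fintype.card_fun, Fintype.card_bool, cardSx]
    rw [Fintype.card_congr e2, Fintype.card_prod, Fintype.card_congr e3,
      Fintype.card_fun, c1, cardTb, Fintype.card_fun, Fintype.card_bool]
  -- union bound
  have hBadle : Fintype.card {r : A × B → Bool // Bad r}
      ≤ 2 ^ s * ((2 ^ s - 1) ^ (2 ^ d₁) * 2 ^ (Fintype.card R)) := by
    rw [Fintype.card_subtype]
    have hsub : Finset.univ.filter Bad
        ⊆ Finset.univ.biUnion (fun φ : Sx → Bool => Finset.univ.filter (Bφ φ)) := by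
      intro r hr
      simp only [Finset.mem_filter, Finset.mem_univ, true_and] at hr
      obtain ⟨φ, hφ⟩ := hr
      exact Finset.mem_biUnion.2 ⟨φ, Finset.mem_univ _, by
        simp only [Finset.mem_filter, Finset.mem_univ, true_and]; exact hφ⟩
    calc (Finset.univ.filter Bad).card
        ≤ (Finset.univ.biUnion (fun φ : Sx → Bool => Finset.univ.filter (Bφ φ))).card :=
          Finset.card_le_card hsub
      _ ≤ ∑ φ : Sx → Bool, (Finset.univ.filter (Bφ φ)).card := Finset.card_biUnion_le
      _ = ∑ φ : Sx → Bool, Fintype.card {r : A × B → Bool // Bφ φ r} := by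
          simp [Fintype.card_subtype]
      _ = 2 ^ s * ((2 ^ s - 1) ^ (2 ^ d₁) * 2 ^ (Fintype.card R)) := by
          rw [Finset.sum_congr rfl (fun φ _ => hMφ φ), Finset.sum_const, Finset.card_univ,
            Fintype.card_fun, Fintype.card_bool, cardSx, smul_eq_mul]
  -- total count
  have hΩ : Fintype.card (A × B → Bool) = 2 ^ (s * 2 ^ d₁) * 2 ^ (Fintype.card R) := by
    rw [Fintype.card_congr e, Fintype.card_prod, Fintype.card_fun, Fintype.card_fun,
      Fintype.card_bool, Fintype.card_prod, cardSx, cardTb, pow_mul]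
  have hGoodcard : Fintype.card {r : A × B → Bool // ¬ Bad r}
      = Fintype.card (A × B → Bool) - Fintype.card {r : A × B → Bool // Bad r} :=
    Fintype.card_subtype_compl _
  have hmono : Fintype.card {r : A × B → Bool // ¬ Bad r}
      ≤ Fintype.card {r : A × B → Bool // Goal r} :=
    Fintype.card_subtype_mono _ _ himp
  -- pass to reals
  rw [Nat.card_eq_fintype_card, Nat.card_eq_fintype_card]
  have hΩpos : (0:ℝ) < (Fintype.card (A × B → Bool) : ℝ) := by
    exact_mod_cast Fintype.card_pos
  rw [le_div_iff₀ hΩpos]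
  set Ω := Fintype.card (A × B → Bool) with hΩdef
  set Nb := Fintype.card {r : A × B → Bool // Bad r} with hNbdef
  have hble : Nb ≤ Ω := Fintype.card_subtype_le _
  -- numeric bound
  set m := d₁ - s with hm_def
  have hsm : s + m = d₁ := by omega
  have hnum := numeric s m (by omega) (by omega)
  rw [hsm] at hnum
  have hcast : ((2 ^ s - 1 : ℕ) : ℝ) = (2:ℝ) ^ s - 1 := by
    have h1 : (1:ℕ) ≤ 2 ^ s := Nat.one_le_two_pow
    push_cast [h1]
    ring
  have h3Nb : 3 * (Nb : ℝ) ≤ (Ω : ℝ) := by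
    have h1 : (Nb : ℝ) ≤ (2:ℝ) ^ s * (((2:ℝ) ^ s - 1) ^ (2 ^ d₁) * 2 ^ (Fintype.card R)) := by
      have h2 : ((2 ^ s * ((2 ^ s - 1) ^ (2 ^ d₁) * 2 ^ (Fintype.card R)) : ℕ) : ℝ)
          = (2:ℝ) ^ s * (((2:ℝ) ^ s - 1) ^ (2 ^ d₁) * 2 ^ (Fintype.card R)) := by
        push_cast [hcast]
        ring
      rw [← h2]
      exact_mod_cast hBadle
    have h2 : ((Ω : ℕ) : ℝ) = (2:ℝ) ^ (s * 2 ^ d₁) * 2 ^ (Fintype.card R) := by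
      rw [hΩ]; push_cast; ring
    rw [h2]
    have hc : (0:ℝ) ≤ (2:ℝ) ^ (Fintype.card R) := by positivity
    have h4 : 3 * ((2:ℝ) ^ s * (((2:ℝ) ^ s - 1) ^ (2 ^ d₁)))
        ≤ (2:ℝ) ^ (s * 2 ^ d₁) := by
      rw [pow_mul]
      linarith [hnum]
    nlinarith
  have hgood : ((Ω - Nb : ℕ) : ℝ) = (Ω : ℝ) - (Nb : ℝ) := Nat.cast_sub hble
  calc (2:ℝ) / 3 * Ω ≤ (Ω : ℝ) - (Nb : ℝ) := by linarith
    _ = ((Ω - Nb : ℕ) : ℝ) := hgood.symm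
    _ = (Fintype.card {r : A × B → Bool // ¬ Bad r} : ℝ) := by rw [hGoodcard]
    _ ≤ _ := Nat.cast_le.2 hmono
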